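/- Let T > 0, let m(0) ∈ ℝ^m be a fixed vector, and let w : ℕ₀^m → (ℝ → ℝ) be a family of differentiable functions on (0,T) such that for every t ∈ (0,T) and x ∈ (0,∞)^m the series u(t,x) = ∑_{n∈ℕ₀^m} n w_n(t) e^{−n·x} converges absolutely, and termwise differentiation is valid: ∂u/∂t (t,x) = ∑_n n (d/dt w_n(t)) e^{−n·x} and ∇u(t,x) = −∑_n n nᵀ w_n(t) e^{−n·x}, all series converging absolutely. If u satisfies the PDE ∂u/∂t (t,x) = −(∇u(t,x)) A (u(t,x) − m(0)) on (0,T) × (0,∞)^m, then the coefficients w_n solve the reduced multicomponent Smoluchowski equation on (0,T): d/dt w_n(t) = ½ ∑_{k+l=n} (kᵀAl) w_k(t) w_l(t) − (nᵀA m(0)) w_n(t) for every n ∈ ℕ₀^m with n ≠ 0. -/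

import Mathlib

set_option maxHeartbeats 1000000

open Filter Topology

lemma dirichlet_unique {ι : Type*} (lam : ι → ℝ) (hinj : Function.Injective lam)
    (hfin : ∀ B : ℝ, {i | lam i ≤ B}.Finite) (a : ι → ℝ)
    (hsum : ∀ s : ℝ, 0 < s → Summable (fun i => |a i| * Real.exp (-(lam i) * s)))
    (hzero : ∀ s : ℝ, 0 < s → ∑' i, a i * Real.exp (-(lam i) * s) = 0) :
    ∀ i, a i = 0 := by
  classical
  by_contra h
  push_neg at h
  obtain ⟨i₀, hi₀⟩ := h
  -- find minimal exponent in support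
  have hTfin : {i | a i ≠ 0 ∧ lam i ≤ lam i₀}.Finite :=
    (hfin (lam i₀)).subset (fun i hi => hi.2)
  obtain ⟨n₀, hn₀T, hn₀min⟩ := Set.exists_min_image _ lam hTfin ⟨i₀, hi₀, le_rfl⟩
  have hmin : ∀ i, a i ≠ 0 → i ≠ n₀ → lam n₀ < lam i := by
    intro i hai hne
    rcases le_or_gt (lam i) (lam i₀) with h1 | h1
    · exact lt_of_le_of_ne (hn₀min i ⟨hai, h1⟩) (fun he => hne (hinj he).symm)
    · exact lt_of_le_of_lt (hn₀min i₀ ⟨hi₀, le_rfl⟩) h1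
  -- summability of original series
  have hsum' : ∀ s : ℝ, 0 < s → Summable (fun i => a i * Real.exp (-(lam i) * s)) := by
    intro s hs
    refine Summable.of_abs ?_
    have := hsum s hs
    simpa [abs_mul, Real.abs_exp] using this
  -- shifted series
  set g : ℝ → ι → ℝ := fun s i => if i = n₀ then 0 else a i * Real.exp (-(lam i - lam n₀) * s)
    with hg
  have hshift : ∀ s : ℝ, (fun i => a i * Real.exp (-(lam i - lam n₀) * s))
      = fun i => Real.exp (lam n₀ * s) * (a i * Real.exp (-(lam i) * s)) := by
    intro s; funext i
    rw [show -(lam i - lam n₀) * s = lam n₀ * s + -lam i * s by ring, Real.exp_add]; ring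
  have hgsum : ∀ s : ℝ, 0 < s → Summable (fun i => a i * Real.exp (-(lam i - lam n₀) * s)) := by
    intro s hs; rw [hshift s]; exact (hsum' s hs).mul_left _
  have hgz : ∀ s : ℝ, 0 < s → a n₀ + ∑' i, g s i = 0 := by
    intro s hs
    have h1 : ∑' i, a i * Real.exp (-(lam i - lam n₀) * s)
        = Real.exp (lam n₀ * s) * ∑' i, a i * Real.exp (-(lam i) * s) := by
      rw [hshift s, tsum_mul_left]
    have h2 := (hgsum s hs).tsum_eq_add_tsum_ite n₀
    rw [h1, hzero s hs, mul_zero] at h2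
    have : a n₀ * Real.exp (-(lam n₀ - lam n₀) * s) = a n₀ := by simp
    rw [this] at h2
    rw [← h2]
  -- dominated convergence
  set bound : ι → ℝ := fun i => if i = n₀ then 0 else |a i| * Real.exp (-(lam i - lam n₀) * 1)
  have hboundsum : Summable bound := by
    refine Summable.of_nonneg_of_le (fun i => ?_) (fun i => ?_)
      (((hsum 1 one_pos).mul_left (Real.exp (lam n₀)))) 
    · by_cases h : i = n₀
      · simp [bound, h]
      · simp only [bound, if_neg h]; positivity
    · by_cases h : i = n₀
      · simp only [bound, if_pos h]; positivity
      · simp only [bound, if_neg h]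
        rw [mul_comm (Real.exp (lam n₀)), mul_assoc, ← Real.exp_add]
        apply mul_le_mul_of_nonneg_left _ (abs_nonneg _)
        exact Real.exp_le_exp.2 (by ring_nf; rfl)
  have htend : Tendsto (fun s => ∑' i, g s i) atTop (𝓝 (∑' _ : ι, (0:ℝ))) := by
    apply tendsto_tsum_of_dominated_convergence hboundsum
    · intro i
      by_cases h : i = n₀
      · simp only [g, if_pos h]; exact tendsto_const_nhds
      · simp only [g, if_neg h]
        by_cases ha : a i = 0
        · simp only [ha, zero_mul]; exact tendsto_const_nhds
        · have hc : 0 < lam i - lam n₀ := sub_pos.2 (hmin i ha h)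
          have h1 : Tendsto (fun s : ℝ => (lam i - lam n₀) * s) atTop atTop :=
            Tendsto.const_mul_atTop hc tendsto_id
          have h2 : Tendsto (fun s : ℝ => Real.exp (-((lam i - lam n₀) * s))) atTop (𝓝 0) :=
            Real.tendsto_exp_neg_atTop_nhds_zero.comp h1
          have h3 := h2.const_mul (a i)
          rw [mul_zero] at h3
          convert h3 using 2 with s
          ring_nf
    · filter_upwards [eventually_ge_atTop (1:ℝ)] with s hs i
      by_cases h : i = n₀
      · simp [g, bound, h]
      · simp only [g, bound, if_neg h, Real.norm_eq_abs, abs_mul, Real.abs_exp]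
        by_cases ha : a i = 0
        · simp [ha]
        · apply mul_le_mul_of_nonneg_left _ (abs_nonneg _)
          apply Real.exp_le_exp.2
          have hc : 0 < lam i - lam n₀ := sub_pos.2 (hmin i ha h)
          nlinarith
  rw [tsum_zero] at htend
  -- ∑' g s = -a n₀ for s ≥ 1, so limit is -a n₀, hence a n₀ = 0
  have heq : ∀ᶠ s in atTop, (fun s => ∑' i, g s i) s = -a n₀ := by
    filter_upwards [eventually_gt_atTop (0:ℝ)] with s hs
    have := hgz s hs; linarith
  have h4 : Tendsto (fun _ : ℝ => -a n₀) atTop (𝓝 (0:ℝ)) := htend.congr' heq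
  have h5 : -a n₀ = 0 := tendsto_nhds_unique tendsto_const_nhds h4
  exact hn₀T.1 (by linarith)

lemma theta_facts : ∃ θ : ℝ, 0 < θ ∧ Transcendental ℤ θ := by
  refine ⟨liouvilleNumber 3, ?_, transcendental_liouvilleNumber (by norm_num)⟩
  unfold liouvilleNumber
  have hs : Summable fun i : ℕ => 1 / (3:ℝ) ^ (Nat.factorial i) :=
    LiouvilleNumber.summable (by norm_num)
  exact hs.tsum_pos (fun i => by positivity) 0 (by norm_num)

lemma lam_inj (m : ℕ) (θ : ℝ) (hθ : Transcendental ℤ θ) :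
    Function.Injective (fun n : Fin m → ℕ => ∑ r, (n r : ℝ) * θ ^ ((r : ℕ) + 1)) := by
  intro n k he
  simp only at he
  by_contra hne
  have hex : ∃ r, n r ≠ k r := by
    by_contra hc; push_neg at hc; exact hne (funext hc)
  set P : Polynomial ℤ := ∑ r : Fin m, Polynomial.C ((n r : ℤ) - (k r : ℤ)) * Polynomial.X ^ ((r : ℕ) + 1) with hP
  have hev : (Polynomial.aeval θ) P = 0 := by
    rw [hP]
    simp only [map_sum, map_mul, Polynomial.aeval_C, Polynomial.aeval_X_pow]
    push_cast
    simp only [sub_mul]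
    rw [Finset.sum_sub_distrib, he, sub_self]
  have hP0 : P = 0 := by
    by_contra hP0
    exact hθ ⟨P, hP0, hev⟩
  obtain ⟨r, hr⟩ := hex
  have : P.coeff ((r : ℕ) + 1) = (n r : ℤ) - (k r : ℤ) := by
    rw [hP, Polynomial.finset_sum_coeff]
    rw [Finset.sum_eq_single r]
    · rw [Polynomial.coeff_C_mul, Polynomial.coeff_X_pow, if_pos rfl, mul_one]
    · intro b _ hb
      simp only [Polynomial.coeff_C_mul, Polynomial.coeff_X_pow]
      rw [if_neg, mul_zero]
      intro hc
      exact hb (Fin.ext (by omega))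
    · intro hc; exact absurd (Finset.mem_univ r) hc
  rw [hP0] at this
  simp at this
  omega

lemma lam_fin (m : ℕ) (θ : ℝ) (hθ : 0 < θ) (B : ℝ) :
    {n : Fin m → ℕ | (∑ r, (n r : ℝ) * θ ^ ((r : ℕ) + 1)) ≤ B}.Finite := by
  set c : Fin m → ℝ := fun r => θ ^ ((r : ℕ) + 1) with hc
  have hcpos : ∀ r, 0 < c r := fun r => pow_pos hθ _
  apply (Set.finite_Iic (fun i : Fin m => ⌊B / c i⌋₊)).subset
  intro n hn
  simp only [Set.mem_setOf_eq] at hn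
  have hB : 0 ≤ B := le_trans (Finset.sum_nonneg (fun r _ => by positivity)) hn
  intro i
  simp only
  rw [Nat.le_floor_iff]
  · rw [le_div_iff₀ (hcpos i)]
    calc (n i : ℝ) * c i ≤ ∑ r, (n r : ℝ) * c r := by
          apply Finset.single_le_sum (f := fun r => (n r : ℝ) * c r)
          · intro r _; positivity
          · exact Finset.mem_univ i
      _ ≤ B := hn
  · exact div_nonneg hB (hcpos i).le

lemma multi_unique (m : ℕ) (a : (Fin m → ℕ) → ℝ)
    (hsum : ∀ x : Fin m → ℝ, (∀ i, 0 < x i) →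
      Summable (fun n : Fin m → ℕ => |a n * Real.exp (-∑ r, (n r : ℝ) * x r)|))
    (hzero : ∀ x : Fin m → ℝ, (∀ i, 0 < x i) →
      ∑' n : Fin m → ℕ, a n * Real.exp (-∑ r, (n r : ℝ) * x r) = 0) :
    ∀ n, a n = 0 := by
  obtain ⟨θ, hθpos, hθtr⟩ := theta_facts
  set lam : (Fin m → ℕ) → ℝ := fun n => ∑ r, (n r : ℝ) * θ ^ ((r : ℕ) + 1) with hlam
  have hx : ∀ s : ℝ, 0 < s → ∀ i : Fin m, 0 < θ ^ ((i : ℕ) + 1) * s :=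
    fun s hs i => mul_pos (pow_pos hθpos _) hs
  have key : ∀ (n : Fin m → ℕ) (s : ℝ),
      (-∑ r, (n r : ℝ) * (θ ^ ((r : ℕ) + 1) * s)) = -(lam n) * s := by
    intro n s
    rw [hlam, neg_mul, Finset.sum_mul]
    congr 1
    exact Finset.sum_congr rfl (fun r _ => by ring)
  apply dirichlet_unique lam (lam_inj m θ hθtr) (lam_fin m θ hθpos) a
  · intro s hs
    have := hsum (fun i => θ ^ ((i : ℕ) + 1) * s) (hx s hs)
    apply Summable.congr this
    intro n
    rw [key n s, abs_mul, Real.abs_exp]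
  · intro s hs
    have := hzero (fun i => θ ^ ((i : ℕ) + 1) * s) (hx s hs)
    rw [← this]
    exact tsum_congr (fun n => by rw [key n s])



noncomputable def Ex (m : ℕ) (n : Fin m → ℕ) (x : Fin m → ℝ) : ℝ :=
  Real.exp (-∑ r, (n r : ℝ) * x r)

lemma Ex_pos (m : ℕ) (n : Fin m → ℕ) (x : Fin m → ℝ) : 0 < Ex m n x := Real.exp_pos _

lemma Ex_mul (m : ℕ) (p q : Fin m → ℕ) (x : Fin m → ℝ) :
    Ex m p x * Ex m q x = Ex m (p + q) x := by
  unfold Ex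
  rw [← Real.exp_add]
  congr 1
  rw [← neg_add, ← Finset.sum_add_distrib]
  congr 1
  refine Finset.sum_congr rfl fun r _ => ?_
  have : ((p + q) r : ℝ) = (p r : ℝ) + q r := by push_cast [Pi.add_apply]; ring
  rw [this]; ring

def sigmaEquiv (m : ℕ) :
    ((Fin m → ℕ) × (Fin m → ℕ)) ≃ Σ n : Fin m → ℕ, {k // k ∈ Finset.Iic n} where
  toFun z := ⟨z.1 + z.2, ⟨z.1, Finset.mem_Iic.2 le_self_add⟩⟩
  invFun σ := (σ.2.1, σ.1 - σ.2.1)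
  left_inv z := by
    obtain ⟨p, q⟩ := z
    simp [add_tsub_cancel_left]
  right_inv σ := by
    obtain ⟨n, k, hk⟩ := σ
    exact Sigma.subtype_ext (add_tsub_cancel_of_le (Finset.mem_Iic.1 hk)) rfl

variable {m : ℕ} {x : Fin m → ℝ}

lemma cauchy_summable_pairs {f g : (Fin m → ℕ) → ℝ}
    (hf : Summable fun p => |f p * Ex m p x|) (hg : Summable fun q => |g q * Ex m q x|) :
    Summable fun z : (Fin m → ℕ) × (Fin m → ℕ) =>
      (f z.1 * Ex m z.1 x) * (g z.2 * Ex m z.2 x) := by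
  have hf' : Summable fun p => ‖f p * Ex m p x‖ := by simpa only [Real.norm_eq_abs] using hf
  have hg' : Summable fun q => ‖g q * Ex m q x‖ := by simpa only [Real.norm_eq_abs] using hg
  exact summable_mul_of_summable_norm hf' hg'

lemma cauchy_sigma_summable {f g : (Fin m → ℕ) → ℝ}
    (hf : Summable fun p => |f p * Ex m p x|) (hg : Summable fun q => |g q * Ex m q x|) :
    Summable fun σ : Σ n : Fin m → ℕ, {k // k ∈ Finset.Iic n} =>
      (f σ.2.1 * Ex m σ.2.1 x) * (g (σ.1 - σ.2.1) * Ex m (σ.1 - σ.2.1) x) := by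
  have hFG := cauchy_summable_pairs hf hg
  have := ((sigmaEquiv m).symm.summable_iff
    (f := fun z : (Fin m → ℕ) × (Fin m → ℕ) => (f z.1 * Ex m z.1 x) * (g z.2 * Ex m z.2 x))).2 hFG
  exact this

lemma inner_sum_eq {f g : (Fin m → ℕ) → ℝ} (n : Fin m → ℕ) :
    ∑ k ∈ Finset.Iic n, (f k * Ex m k x) * (g (n - k) * Ex m (n - k) x)
      = (∑ k ∈ Finset.Iic n, f k * g (n - k)) * Ex m n x := by
  rw [Finset.sum_mul]
  refine Finset.sum_congr rfl fun k hk => ?_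
  have h1 : Ex m k x * Ex m (n - k) x = Ex m n x := by
    rw [Ex_mul, add_tsub_cancel_of_le (Finset.mem_Iic.1 hk)]
  calc (f k * Ex m k x) * (g (n - k) * Ex m (n - k) x)
      = f k * g (n - k) * (Ex m k x * Ex m (n - k) x) := by ring
    _ = f k * g (n - k) * Ex m n x := by rw [h1]

lemma cauchyE {f g : (Fin m → ℕ) → ℝ}
    (hf : Summable fun p => |f p * Ex m p x|) (hg : Summable fun q => |g q * Ex m q x|) :
    ((∑' p, f p * Ex m p x) * ∑' q, g q * Ex m q x)
      = ∑' n, (∑ k ∈ Finset.Iic n, f k * g (n - k)) * Ex m n x := by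
  have hf' : Summable fun p => ‖f p * Ex m p x‖ := by simpa only [Real.norm_eq_abs] using hf
  have hg' : Summable fun q => ‖g q * Ex m q x‖ := by simpa only [Real.norm_eq_abs] using hg
  rw [tsum_mul_tsum_of_summable_norm hf' hg']
  have hσ := cauchy_sigma_summable hf hg
  have h1 : ∑' z : (Fin m → ℕ) × (Fin m → ℕ), (f z.1 * Ex m z.1 x) * (g z.2 * Ex m z.2 x)
      = ∑' σ : Σ n : Fin m → ℕ, {k // k ∈ Finset.Iic n},
          (f σ.2.1 * Ex m σ.2.1 x) * (g (σ.1 - σ.2.1) * Ex m (σ.1 - σ.2.1) x) :=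
    ((sigmaEquiv m).symm.tsum_eq _).symm
  rw [h1, hσ.tsum_sigma]
  refine tsum_congr fun n => ?_
  rw [Finset.tsum_subtype (Finset.Iic n) (fun k => (f k * Ex m k x) * (g (n - k) * Ex m (n - k) x))]
  exact inner_sum_eq n

lemma cauchyE_summable_abs {f g : (Fin m → ℕ) → ℝ}
    (hf : Summable fun p => |f p * Ex m p x|) (hg : Summable fun q => |g q * Ex m q x|) :
    Summable fun n => (∑ k ∈ Finset.Iic n, |f k| * |g (n - k)|) * Ex m n x := by
  have hf2 : Summable fun p => abs ((|f p|) * Ex m p x) := by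
    refine hf.congr fun p => ?_
    rw [abs_mul, abs_mul, abs_abs]
  have hg2 : Summable fun q => abs ((|g q|) * Ex m q x) := by
    refine hg.congr fun q => ?_
    rw [abs_mul, abs_mul, abs_abs]
  have hσ := cauchy_sigma_summable hf2 hg2
  have := hσ.sigma
  refine this.congr fun n => ?_
  rw [Finset.tsum_subtype (Finset.Iic n)
    (fun k => (|f k| * Ex m k x) * (|g (n - k)| * Ex m (n - k) x))]
  exact inner_sum_eq (f := fun p => |f p|) (g := fun q => |g q|) n

lemma cauchyE_summable {f g : (Fin m → ℕ) → ℝ}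
    (hf : Summable fun p => |f p * Ex m p x|) (hg : Summable fun q => |g q * Ex m q x|) :
    Summable fun n => (∑ k ∈ Finset.Iic n, f k * g (n - k)) * Ex m n x := by
  refine Summable.of_abs (Summable.of_nonneg_of_le (fun n => abs_nonneg _) (fun n => ?_)
    (cauchyE_summable_abs hf hg))
  rw [abs_mul, abs_of_pos (Ex_pos m n x)]
  apply mul_le_mul_of_nonneg_right _ (Ex_pos m n x).le
  calc |∑ k ∈ Finset.Iic n, f k * g (n - k)| ≤ ∑ k ∈ Finset.Iic n, |f k * g (n - k)| :=
        Finset.abs_sum_le_sum_abs _ _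
    _ = ∑ k ∈ Finset.Iic n, |f k| * |g (n - k)| := by
        exact Finset.sum_congr rfl fun k _ => abs_mul _ _




/-- If the power-series ansatz `u(t,x) = ∑ₙ n wₙ(t) e^{-n·x}` (with valid
termwise differentiation and absolutely convergent series) satisfies the PDE
`∂u/∂t = -(∇u) A (u - m₀)` on `(0,T) × (0,∞)^m`, then the coefficients `wₙ` solve the
reduced multicomponent Smoluchowski equation on `(0,T)` for every `n ≠ 0`. -/
theorem power_series_pde_solves_smoluchowski
    (m : ℕ) (hm : 1 ≤ m)
    (A : Matrix (Fin m) (Fin m) ℝ) (hAsymm : A.IsSymm) (hA0 : ∀ i j, 0 ≤ A i j)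
    (T : ℝ) (hT : 0 < T) (m₀ : Fin m → ℝ)
    (w w' : (Fin m → ℕ) → ℝ → ℝ)
    (hderiv : ∀ n : Fin m → ℕ, ∀ t ∈ Set.Ioo (0:ℝ) T, HasDerivAt (w n) (w' n t) t)
    -- absolute convergence of the series for u, its time derivative and its Jacobian
    (habs : ∀ t ∈ Set.Ioo (0:ℝ) T, ∀ x : Fin m → ℝ, (∀ i, 0 < x i) → ∀ i : Fin m,
      Summable (fun n : Fin m → ℕ =>
        |(n i : ℝ) * w n t * Real.exp (-∑ r, (n r : ℝ) * x r)|))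
    (habs' : ∀ t ∈ Set.Ioo (0:ℝ) T, ∀ x : Fin m → ℝ, (∀ i, 0 < x i) → ∀ i : Fin m,
      Summable (fun n : Fin m → ℕ =>
        |(n i : ℝ) * w' n t * Real.exp (-∑ r, (n r : ℝ) * x r)|))
    (habs'' : ∀ t ∈ Set.Ioo (0:ℝ) T, ∀ x : Fin m → ℝ, (∀ i, 0 < x i) → ∀ i j : Fin m,
      Summable (fun n : Fin m → ℕ =>
        |(n i : ℝ) * (n j : ℝ) * w n t * Real.exp (-∑ r, (n r : ℝ) * x r)|))
    -- termwise differentiation in time is valid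
    (hut : ∀ t ∈ Set.Ioo (0:ℝ) T, ∀ x : Fin m → ℝ, (∀ i, 0 < x i) → ∀ i : Fin m,
      HasDerivAt
        (fun s => ∑' n : Fin m → ℕ, (n i : ℝ) * w n s * Real.exp (-∑ r, (n r : ℝ) * x r))
        (∑' n : Fin m → ℕ, (n i : ℝ) * w' n t * Real.exp (-∑ r, (n r : ℝ) * x r)) t)
    -- the spatial Jacobian is given by the termwise-differentiated series
    (hux : ∀ t ∈ Set.Ioo (0:ℝ) T, ∀ x : Fin m → ℝ, (∀ i, 0 < x i) → ∀ i j : Fin m,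
      HasDerivAt
        (fun s => ∑' n : Fin m → ℕ, (n i : ℝ) * w n t *
          Real.exp (-∑ r, (n r : ℝ) * Function.update x j s r))
        (-∑' n : Fin m → ℕ,
          (n i : ℝ) * (n j : ℝ) * w n t * Real.exp (-∑ r, (n r : ℝ) * x r)) (x j))
    -- u satisfies the PDE ∂u/∂t = -(∇u) A (u - m₀)
    (hPDE : ∀ t ∈ Set.Ioo (0:ℝ) T, ∀ x : Fin m → ℝ, (∀ i, 0 < x i) → ∀ i : Fin m,
      HasDerivAt
        (fun s => ∑' n : Fin m → ℕ, (n i : ℝ) * w n s * Real.exp (-∑ r, (n r : ℝ) * x r))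
        (-∑ j, (-∑' n : Fin m → ℕ,
            (n i : ℝ) * (n j : ℝ) * w n t * Real.exp (-∑ r, (n r : ℝ) * x r)) *
          (∑ k, A j k *
            ((∑' n : Fin m → ℕ, (n k : ℝ) * w n t * Real.exp (-∑ r, (n r : ℝ) * x r))
              - m₀ k))) t) :
    -- conclusion: `w` solves the reduced multicomponent Smoluchowski equation for n ≠ 0
    ∀ n : Fin m → ℕ, n ≠ 0 → ∀ t ∈ Set.Ioo (0:ℝ) T,
      w' n t =
        (1/2) * ∑ k ∈ Finset.Iic n,
            (∑ i, ∑ j, (k i : ℝ) * A i j * ((n - k) j : ℝ)) * w k t * w (n - k) t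
          - (∑ i, ∑ j, (n i : ℝ) * A i j * m₀ j) * w n t := by
  classical
  intro n hn t ht
  obtain ⟨i, hi⟩ : ∃ i, n i ≠ 0 := by
    by_contra h; push_neg at h; exact hn (funext fun i => h i)
  -- notation
  set f : Fin m → (Fin m → ℕ) → ℝ := fun j l => (l i : ℝ) * (l j : ℝ) * w l t with hfdef
  set g : Fin m → (Fin m → ℕ) → ℝ := fun k q => (q k : ℝ) * w q t with hgdef
  set P : Fin m → Fin m → (Fin m → ℕ) → ℝ :=
    fun j k p => ∑ l ∈ Finset.Iic p, f j l * g k (p - l) with hPdef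
  set b : (Fin m → ℕ) → ℝ :=
    fun p => ∑ j, ∑ k, (A j k * P j k p - A j k * m₀ k * f j p) with hbdef
  set a : (Fin m → ℕ) → ℝ := fun p => (p i : ℝ) * w' p t - b p with hadef
  -- coefficient identity via uniqueness of Dirichlet series
  have key : ∀ p, a p = 0 := by
    apply multi_unique m a
    · -- summability of |a p * E|
      intro x hx
      have hf : ∀ j, Summable fun l => |f j l * Ex m l x| := fun j => habs'' t ht x hx i j
      have hg : ∀ k, Summable fun q => |g k q * Ex m q x| := fun k => habs t ht x hx k
      have hPabs : ∀ j k, Summable fun p =>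
          (∑ l ∈ Finset.Iic p, |f j l| * |g k (p - l)|) * Ex m p x := fun j k =>
        cauchyE_summable_abs (hf j) (hg k)
      set bound : (Fin m → ℕ) → ℝ := fun p =>
        |(p i : ℝ) * w' p t * Ex m p x| + ∑ j, ∑ k,
          (|A j k| * ((∑ l ∈ Finset.Iic p, |f j l| * |g k (p - l)|) * Ex m p x)
            + |A j k * m₀ k| * |f j p * Ex m p x|) with hbound
      have hboundsum : Summable bound := (habs' t ht x hx i).add
        (summable_sum fun j _ => summable_sum fun k _ =>
          ((hPabs j k).mul_left _).add ((hf j).mul_left _))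
      refine Summable.of_nonneg_of_le (fun p => abs_nonneg _) (fun p => ?_) hboundsum
      show |a p * Ex m p x| ≤ bound p
      have hEp := Ex_pos m p x
      have h1 : |a p * Ex m p x| ≤ |(p i : ℝ) * w' p t * Ex m p x| + |b p * Ex m p x| := by
        have : a p * Ex m p x = (p i : ℝ) * w' p t * Ex m p x - b p * Ex m p x := by
          rw [hadef]; ring
        rw [this]
        exact abs_sub _ _
      have h2 : |b p * Ex m p x| ≤ ∑ j, ∑ k,
          (|A j k| * ((∑ l ∈ Finset.Iic p, |f j l| * |g k (p - l)|) * Ex m p x)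
            + |A j k * m₀ k| * |f j p * Ex m p x|) := by
        rw [abs_mul, abs_of_pos hEp]
        calc |b p| * Ex m p x
            ≤ (∑ j, ∑ k, (|A j k| * (∑ l ∈ Finset.Iic p, |f j l| * |g k (p - l)|)
                + |A j k * m₀ k| * |f j p|)) * Ex m p x := by
              apply mul_le_mul_of_nonneg_right _ hEp.le
              rw [hbdef]
              calc |∑ j, ∑ k, (A j k * P j k p - A j k * m₀ k * f j p)|
                  ≤ ∑ j, |∑ k, (A j k * P j k p - A j k * m₀ k * f j p)| :=
                    Finset.abs_sum_le_sum_abs _ _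
                _ ≤ ∑ j, ∑ k, |A j k * P j k p - A j k * m₀ k * f j p| :=
                    Finset.sum_le_sum fun j _ => Finset.abs_sum_le_sum_abs _ _
                _ ≤ ∑ j, ∑ k, (|A j k| * (∑ l ∈ Finset.Iic p, |f j l| * |g k (p - l)|)
                    + |A j k * m₀ k| * |f j p|) := by
                    refine Finset.sum_le_sum fun j _ => Finset.sum_le_sum fun k _ => ?_
                    calc |A j k * P j k p - A j k * m₀ k * f j p|
                        ≤ |A j k * P j k p| + |A j k * m₀ k * f j p| := abs_sub _ _
                      _ = |A j k| * |P j k p| + |A j k * m₀ k| * |f j p| := by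
                          rw [abs_mul, abs_mul (A j k * m₀ k)]
                      _ ≤ |A j k| * (∑ l ∈ Finset.Iic p, |f j l| * |g k (p - l)|)
                          + |A j k * m₀ k| * |f j p| := by
                          apply add_le_add_left
                          apply mul_le_mul_of_nonneg_left _ (abs_nonneg _)
                          rw [hPdef]
                          calc |∑ l ∈ Finset.Iic p, f j l * g k (p - l)|
                              ≤ ∑ l ∈ Finset.Iic p, |f j l * g k (p - l)| :=
                                Finset.abs_sum_le_sum_abs _ _
                            _ = ∑ l ∈ Finset.Iic p, |f j l| * |g k (p - l)| :=
                                Finset.sum_congr rfl fun l _ => abs_mul _ _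
          _ = ∑ j, ∑ k, (|A j k| * ((∑ l ∈ Finset.Iic p, |f j l| * |g k (p - l)|) * Ex m p x)
                + |A j k * m₀ k| * (|f j p| * Ex m p x)) := by
              rw [Finset.sum_mul]
              refine Finset.sum_congr rfl fun j _ => ?_
              rw [Finset.sum_mul]
              exact Finset.sum_congr rfl fun k _ => by ring
          _ = ∑ j, ∑ k, (|A j k| * ((∑ l ∈ Finset.Iic p, |f j l| * |g k (p - l)|) * Ex m p x)
                + |A j k * m₀ k| * |f j p * Ex m p x|) := by
              refine Finset.sum_congr rfl fun j _ => Finset.sum_congr rfl fun k _ => ?_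
              rw [abs_mul (f j p), abs_of_pos hEp]
      rw [hbound]
      exact le_trans h1 (add_le_add_right h2 _)
    · -- vanishing of the combined series
      intro x hx
      have hf : ∀ j, Summable fun l => |f j l * Ex m l x| := fun j => habs'' t ht x hx i j
      have hg : ∀ k, Summable fun q => |g k q * Ex m q x| := fun k => habs t ht x hx k
      have hW : Summable fun p => (p i : ℝ) * w' p t * Ex m p x := (habs' t ht x hx i).of_abs
      have hP : ∀ j k, Summable fun p => P j k p * Ex m p x := fun j k =>
        cauchyE_summable (hf j) (hg k)
      have hfE : ∀ j, Summable fun p => f j p * Ex m p x := fun j => (hf j).of_abs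
      have he : (fun p => b p * Ex m p x)
          = fun p => ∑ j, ∑ k,
              (A j k * (P j k p * Ex m p x) - A j k * m₀ k * (f j p * Ex m p x)) := by
        funext p
        rw [hbdef]
        rw [Finset.sum_mul]
        refine Finset.sum_congr rfl fun j _ => ?_
        rw [Finset.sum_mul]
        exact Finset.sum_congr rfl fun k _ => by ring
      have hbE : Summable fun p => b p * Ex m p x := by
        rw [he]
        exact summable_sum fun j _ => summable_sum fun k _ =>
          (((hP j k).mul_left _).sub ((hfE j).mul_left _))
      -- pointwise PDE identity
      have hpde0 := (hut t ht x hx i).unique (hPDE t ht x hx i)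
      have hGU : ∀ j k : Fin m,
          (∑' p : Fin m → ℕ, (p i : ℝ) * (p j : ℝ) * w p t * Ex m p x) *
            (∑' p : Fin m → ℕ, (p k : ℝ) * w p t * Ex m p x)
            = ∑' p, P j k p * Ex m p x := fun j k => cauchyE (hf j) (hg k)
      have hstep1 : (-∑ j, (-∑' p : Fin m → ℕ,
              (p i : ℝ) * (p j : ℝ) * w p t * Ex m p x) *
            (∑ k, A j k *
              ((∑' p : Fin m → ℕ, (p k : ℝ) * w p t * Ex m p x) - m₀ k)))
          = ∑' p, b p * Ex m p x := by
        calc (-∑ j, (-∑' p : Fin m → ℕ,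
              (p i : ℝ) * (p j : ℝ) * w p t * Ex m p x) *
            (∑ k, A j k *
              ((∑' p : Fin m → ℕ, (p k : ℝ) * w p t * Ex m p x) - m₀ k)))
            = ∑ j, (∑' p : Fin m → ℕ, (p i : ℝ) * (p j : ℝ) * w p t * Ex m p x) *
                (∑ k, A j k *
                  ((∑' p : Fin m → ℕ, (p k : ℝ) * w p t * Ex m p x) - m₀ k)) := by
              rw [← Finset.sum_neg_distrib]
              exact Finset.sum_congr rfl fun j _ => by ring
          _ = ∑ j, ∑ k, (A j k *
                ((∑' p : Fin m → ℕ, (p i : ℝ) * (p j : ℝ) * w p t * Ex m p x) *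
                  (∑' p : Fin m → ℕ, (p k : ℝ) * w p t * Ex m p x))
                - A j k * m₀ k *
                  (∑' p : Fin m → ℕ, (p i : ℝ) * (p j : ℝ) * w p t * Ex m p x)) := by
              refine Finset.sum_congr rfl fun j _ => ?_
              rw [Finset.mul_sum]
              exact Finset.sum_congr rfl fun k _ => by ring
          _ = ∑ j, ∑ k, (A j k * (∑' p, P j k p * Ex m p x)
                - A j k * m₀ k * (∑' p, f j p * Ex m p x)) := by
              refine Finset.sum_congr rfl fun j _ => Finset.sum_congr rfl fun k _ => ?_
              rw [hGU j k]
          _ = ∑ j, ∑ k, ∑' p, (A j k * (P j k p * Ex m p x)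
                - A j k * m₀ k * (f j p * Ex m p x)) := by
              refine Finset.sum_congr rfl fun j _ => Finset.sum_congr rfl fun k _ => ?_
              rw [← tsum_mul_left, ← tsum_mul_left,
                ← ((hP j k).mul_left _).tsum_sub ((hfE j).mul_left _)]
          _ = ∑' p, ∑ j, ∑ k, (A j k * (P j k p * Ex m p x)
                - A j k * m₀ k * (f j p * Ex m p x)) := by
              have h1 : ∀ j : Fin m, ∑ k, ∑' p, (A j k * (P j k p * Ex m p x)
                  - A j k * m₀ k * (f j p * Ex m p x))
                  = ∑' p, ∑ k, (A j k * (P j k p * Ex m p x)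
                  - A j k * m₀ k * (f j p * Ex m p x)) := fun j =>
                (Summable.tsum_finsetSum fun k _ => ((hP j k).mul_left _).sub ((hfE j).mul_left _)).symm
              rw [Finset.sum_congr rfl fun j _ => h1 j]
              exact (Summable.tsum_finsetSum fun j _ => summable_sum fun k _ =>
                ((hP j k).mul_left _).sub ((hfE j).mul_left _)).symm
          _ = ∑' p, b p * Ex m p x := by
              rw [he]
      have h12 : (∑' p, (p i : ℝ) * w' p t * Ex m p x) = ∑' p, b p * Ex m p x := by
        rw [← hstep1]
        exact hpde0
      have hae : (fun p => a p * Real.exp (-∑ r, ((p r : ℝ)) * x r))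
          = fun p => (p i : ℝ) * w' p t * Ex m p x - b p * Ex m p x := by
        funext p
        show a p * Ex m p x = _
        rw [hadef]
        ring
      rw [hae, hW.tsum_sub hbE, h12, sub_self]
  -- extract the equation for n
  have hkey : (n i : ℝ) * w' n t = b n := by
    have h0 := key n
    have : (n i : ℝ) * w' n t - b n = 0 := h0
    linarith
  -- final algebra
  set S : (Fin m → ℕ) → ℝ := fun l =>
    (∑ j, ∑ k, (l j : ℝ) * A j k * (((n - l) k : ℝ))) * w l t * w (n - l) t with hSdef
  set C : ℝ := ∑ j, ∑ k, (n j : ℝ) * A j k * m₀ k with hCdef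
  have hpart1 : ∑ j, ∑ k, A j k * P j k n = ∑ l ∈ Finset.Iic n, (l i : ℝ) * S l := by
    have e1 : ∑ j, ∑ k, A j k * P j k n
        = ∑ l ∈ Finset.Iic n, ∑ j, ∑ k, A j k * (f j l * g k (n - l)) := by
      simp only [hPdef, Finset.mul_sum]
      rw [Finset.sum_congr rfl fun j (_ : j ∈ Finset.univ) => Finset.sum_comm]
      exact Finset.sum_comm
    rw [e1]
    refine Finset.sum_congr rfl fun l _ => ?_
    rw [hSdef, hfdef, hgdef]
    simp only [Finset.sum_mul, Finset.mul_sum]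
    exact Finset.sum_congr rfl fun j _ => Finset.sum_congr rfl fun k _ => by ring
  have hpart2 : ∑ j, ∑ k, A j k * m₀ k * f j n = (n i : ℝ) * (C * w n t) := by
    rw [hCdef, hfdef]
    simp only [Finset.sum_mul, Finset.mul_sum]
    exact Finset.sum_congr rfl fun j _ => Finset.sum_congr rfl fun k _ => by ring
  have hb : b n = (∑ l ∈ Finset.Iic n, (l i : ℝ) * S l) - (n i : ℝ) * (C * w n t) := by
    rw [hbdef]
    simp only [Finset.sum_sub_distrib]
    rw [hpart1, hpart2]
  -- symmetrization
  have hSsymm : ∀ l ∈ Finset.Iic n, S (n - l) = S l := by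
    intro l hl
    have hle : l ≤ n := Finset.mem_Iic.1 hl
    rw [hSdef]
    simp only [tsub_tsub_cancel_of_le hle]
    have hB : (∑ j, ∑ k, (((n - l) j : ℝ)) * A j k * ((l k : ℝ)))
        = ∑ j, ∑ k, ((l j : ℝ)) * A j k * (((n - l) k : ℝ)) := by
      rw [Finset.sum_comm]
      refine Finset.sum_congr rfl fun j _ => Finset.sum_congr rfl fun k _ => ?_
      rw [hAsymm.apply j k]
      ring
    rw [hB]
    ring
  have hsym : ∑ l ∈ Finset.Iic n, (l i : ℝ) * S l
      = ∑ l ∈ Finset.Iic n, (((n - l) i : ℝ)) * S l := by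
    refine Finset.sum_nbij' (i := fun l => n - l) (j := fun l => n - l) ?_ ?_ ?_ ?_ ?_
    · intro l hl
      exact Finset.mem_Iic.2 (tsub_le_self)
    · intro l hl
      exact Finset.mem_Iic.2 (tsub_le_self)
    · intro l hl
      exact tsub_tsub_cancel_of_le (Finset.mem_Iic.1 hl)
    · intro l hl
      exact tsub_tsub_cancel_of_le (Finset.mem_Iic.1 hl)
    · intro l hl
      rw [tsub_tsub_cancel_of_le (Finset.mem_Iic.1 hl), hSsymm l hl]
  have hcast : ∀ l ∈ Finset.Iic n, ((l i : ℝ) + (((n - l) i : ℝ))) = (n i : ℝ) := by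
    intro l hl
    have hlei : l i ≤ n i := (Finset.mem_Iic.1 hl) i
    have h1 : (n - l) i = n i - l i := rfl
    rw [h1, Nat.cast_sub hlei]
    ring
  have hadd : ∑ l ∈ Finset.Iic n, ((l i : ℝ) * S l)
      + ∑ l ∈ Finset.Iic n, (((n - l) i : ℝ) * S l)
      = (n i : ℝ) * ∑ l ∈ Finset.Iic n, S l := by
    rw [← Finset.sum_add_distrib, Finset.mul_sum]
    refine Finset.sum_congr rfl fun l hl => ?_
    rw [← add_mul, hcast l hl]
  have h4 : ∑ l ∈ Finset.Iic n, (l i : ℝ) * S l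
      = (n i : ℝ) * ((1/2) * ∑ l ∈ Finset.Iic n, S l) := by
    have := hadd
    rw [← hsym] at this
    linarith
  have hfinal : (n i : ℝ) * w' n t
      = (n i : ℝ) * ((1/2) * ∑ l ∈ Finset.Iic n, S l - C * w n t) := by
    rw [hkey, hb, h4]
    ring
  have hni : (n i : ℝ) ≠ 0 := Nat.cast_ne_zero.2 hi
  have := mul_left_cancel₀ hni hfinal
  rw [this, hSdef, hCdef]
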